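/- arXiv:2604.21143 — 4 statements merged into one kernel-verified Lean document; each statement's English description precedes it below -/
import Mathlib

section
/- Let d ≥ 1 be an integer, ε ∈ (0,1), and 1 ≤ i, j ≤ d. Then (ε^d / κ_ε) · Σ_{z ∈ εℤ^d \ {0}, |z| ≤ 1} |z|^{-(d+2)} z_i z_j = δ_{ij} / d, where δ_{ij} is the Kronecker delta and z_i denotes the i-th coordinate of z. -/
/-- The rescaled lattice point `ε·w ∈ εℤ^d ⊂ ℝ^d` (with the Euclidean norm). -/
noncomputable def pt (d : ℕ) (ε : ℝ) (w : Fin d → ℤ) : EuclideanSpace ℝ (Fin d) :=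
  (WithLp.equiv 2 (Fin d → ℝ)).symm fun i => ε * (w i : ℝ)

open scoped Classical in
/-- The normalizing constant `κ_ε := ε^d · Σ_{z ∈ εℤ^d \ {0}, |z| ≤ 1} |z|^{-d}`. -/
noncomputable def kappa (d : ℕ) (ε : ℝ) : ℝ :=
  ε ^ d * ∑' w : Fin d → ℤ,
    (if w ≠ 0 ∧ ‖pt d ε w‖ ≤ 1 then (‖pt d ε w‖ ^ d)⁻¹ else 0)


lemma norm_pt_sq (d : ℕ) (ε : ℝ) (w : Fin d → ℤ) :
    ‖pt d ε w‖ ^ 2 = ∑ k, (ε * (w k : ℝ))^2 := by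
  rw [EuclideanSpace.norm_eq, Real.sq_sqrt (by positivity)]
  refine Finset.sum_congr rfl fun k _ => ?_
  simp [pt, Real.norm_eq_abs, mul_pow, sq_abs]

lemma coord_le (d : ℕ) (ε : ℝ) (w : Fin d → ℤ) (k : Fin d) :
    |ε * (w k : ℝ)| ≤ ‖pt d ε w‖ := by
  have h1 : (ε * (w k : ℝ))^2 ≤ ‖pt d ε w‖^2 := by
    rw [norm_pt_sq]
    exact Finset.single_le_sum (f := fun k => (ε * (w k : ℝ))^2) (fun _ _ => sq_nonneg _) (Finset.mem_univ k)
  calc |ε * (w k : ℝ)| = Real.sqrt ((ε * (w k : ℝ))^2) := (Real.sqrt_sq_eq_abs _).symm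
    _ ≤ Real.sqrt (‖pt d ε w‖^2) := Real.sqrt_le_sqrt h1
    _ = ‖pt d ε w‖ := Real.sqrt_sq (norm_nonneg _)

lemma pt_pos (d : ℕ) {ε : ℝ} (hε : 0 < ε) {w : Fin d → ℤ} (hw : w ≠ 0) :
    0 < ‖pt d ε w‖ := by
  rw [norm_pos_iff]
  intro h
  apply hw
  funext k
  have hk : ε * (w k : ℝ) = 0 := by
    simpa [pt] using congrArg (fun x : EuclideanSpace ℝ (Fin d) => x k) h
  have := mul_eq_zero.1 hk
  rcases this with h' | h'
  · exact absurd h' hε.ne'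
  · exact_mod_cast h'

open scoped Classical

open scoped Classical

lemma summable_aux (d : ℕ) {ε : ℝ} (hε : 0 < ε) (f : (Fin d → ℤ) → ℝ)
    (hf : ∀ w, ¬(w ≠ 0 ∧ ‖pt d ε w‖ ≤ 1) → f w = 0) : Summable f := by
  apply summable_of_ne_finset_zero
    (s := Fintype.piFinset fun _ : Fin d => Finset.Icc (-(⌈ε⁻¹⌉ : ℤ)) ⌈ε⁻¹⌉)
  intro w hw
  apply hf
  rintro ⟨-, hle⟩
  apply hw
  rw [Fintype.mem_piFinset]
  intro k
  rw [Finset.mem_Icc, ← abs_le]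
  have h1 : |ε * (w k : ℝ)| ≤ 1 := le_trans (coord_le d ε w k) hle
  rw [abs_mul, abs_of_pos hε] at h1
  have h2 : |(w k : ℝ)| ≤ ε⁻¹ := by
    rw [← one_div, le_div_iff₀ hε, mul_comm]
    exact h1
  have h3 : ((|w k| : ℤ) : ℝ) ≤ ((⌈ε⁻¹⌉ : ℤ) : ℝ) := by
    push_cast
    exact h2.trans (Int.le_ceil _)
  exact_mod_cast h3

lemma negEquiv_apply (d : ℕ) (i : Fin d) (w : Fin d → ℤ) (k : Fin d) :
    (Equiv.piCongrRight (fun k => if k = i then Equiv.neg ℤ else Equiv.refl ℤ)) w k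
      = if k = i then -(w k) else w k := by
  by_cases h : k = i <;> simp [Equiv.piCongrRight, h]

lemma norm_pt_eq_of_sq (d : ℕ) (ε : ℝ) (w v : Fin d → ℤ)
    (h : ∑ k, (ε * (w k : ℝ))^2 = ∑ k, (ε * (v k : ℝ))^2) :
    ‖pt d ε w‖ = ‖pt d ε v‖ := by
  have h2 : ‖pt d ε w‖ ^ 2 = ‖pt d ε v‖ ^ 2 := by rw [norm_pt_sq, norm_pt_sq, h]
  have := congrArg Real.sqrt h2
  rwa [Real.sqrt_sq (norm_nonneg _), Real.sqrt_sq (norm_nonneg _)] at this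

-- swap invariance
lemma swap_norm (d : ℕ) (ε : ℝ) (i j : Fin d) (w : Fin d → ℤ) :
    ‖pt d ε (w ∘ Equiv.swap i j)‖ = ‖pt d ε w‖ := by
  apply norm_pt_eq_of_sq
  exact Fintype.sum_equiv (Equiv.swap i j) _ _ (fun k => rfl)

lemma swap_ne_zero (d : ℕ) (i j : Fin d) (w : Fin d → ℤ) :
    (w ∘ Equiv.swap i j) ≠ 0 ↔ w ≠ 0 := by
  constructor <;> intro h h' <;> apply h
  · rw [h']; rfl
  · funext k
    have := congrFun h' (Equiv.swap i j k)
    simpa using this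

noncomputable def negE (d : ℕ) (i : Fin d) : (Fin d → ℤ) ≃ (Fin d → ℤ) :=
  Equiv.piCongrRight (fun k => if k = i then Equiv.neg ℤ else Equiv.refl ℤ)

lemma negE_apply (d : ℕ) (i : Fin d) (w : Fin d → ℤ) (k : Fin d) :
    negE d i w k = if k = i then -(w k) else w k := negEquiv_apply d i w k

lemma negE_norm (d : ℕ) (ε : ℝ) (i : Fin d) (w : Fin d → ℤ) :
    ‖pt d ε (negE d i w)‖ = ‖pt d ε w‖ := by
  apply norm_pt_eq_of_sq
  refine Finset.sum_congr rfl fun k _ => ?_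
  rw [negE_apply]
  by_cases h : k = i <;> simp [h, mul_neg]

lemma negE_ne_zero (d : ℕ) (i : Fin d) (w : Fin d → ℤ) :
    negE d i w ≠ 0 ↔ w ≠ 0 := by
  rw [not_iff_not]
  constructor <;> intro h <;> funext k
  · have := congrFun h k
    rw [negE_apply] at this
    by_cases hk : k = i
    · rw [if_pos hk] at this; simpa using this
    · rw [if_neg hk] at this; exact this
  · rw [negE_apply, h]
    simp

open scoped Classical in
/-- for `d ≥ 1`, `ε ∈ (0,1)`, and coordinates `i, j`,
`(ε^d / κ_ε) · Σ_{z ∈ εℤ^d \ {0}, |z| ≤ 1} |z|^{-(d+2)} z_i z_j = δ_{ij} / d`. -/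
theorem lattice_sum_second_moment (d : ℕ) (hd : 1 ≤ d) (ε : ℝ)
    (hε0 : 0 < ε) (hε1 : ε < 1) (i j : Fin d) :
    ε ^ d / kappa d ε * ∑' w : Fin d → ℤ,
      (if w ≠ 0 ∧ ‖pt d ε w‖ ≤ 1 then
        (‖pt d ε w‖ ^ (d + 2))⁻¹ * (ε * (w i : ℝ)) * (ε * (w j : ℝ)) else 0) =
      (if i = j then 1 else 0) / d := by
  -- the κ integrand
  set f₀ : (Fin d → ℤ) → ℝ := fun w =>
    if w ≠ 0 ∧ ‖pt d ε w‖ ≤ 1 then (‖pt d ε w‖ ^ d)⁻¹ else 0 with hf₀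
  set T : ℝ := ∑' w, f₀ w with hT
  have hκ : kappa d ε = ε ^ d * T := rfl
  have hsum₀ : Summable f₀ := summable_aux d hε0 _ (fun w h => if_neg h)
  have hnn : ∀ w, 0 ≤ f₀ w := by
    intro w
    rw [hf₀]
    dsimp only
    split
    · positivity
    · exact le_rfl
  -- positivity of T
  set i0 : Fin d := ⟨0, hd⟩
  set w₀ : Fin d → ℤ := Pi.single i0 1 with hw₀def
  have hw₀ : w₀ ≠ 0 := by
    intro h
    have := congrFun h i0
    simp [hw₀def] at this
  have hnorm₀ : ‖pt d ε w₀‖ = ε := by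
    have hsq : ‖pt d ε w₀‖ ^ 2 = ε ^ 2 := by
      rw [norm_pt_sq]
      rw [hw₀def]
      simp [Pi.single_apply, mul_ite, ite_pow, Finset.sum_ite_eq']
    have := congrArg Real.sqrt hsq
    rwa [Real.sqrt_sq (norm_nonneg _), Real.sqrt_sq hε0.le] at this
  have hTpos : 0 < T := by
    refine Summable.tsum_pos hsum₀ hnn w₀ ?_
    rw [hf₀]
    dsimp only
    rw [if_pos ⟨hw₀, by rw [hnorm₀]; exact hε1.le⟩, hnorm₀]
    positivity
  by_cases hij : i = j
  · -- diagonal case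
    subst hij
    rw [if_pos rfl]
    set g : Fin d → (Fin d → ℤ) → ℝ := fun k w =>
      if w ≠ 0 ∧ ‖pt d ε w‖ ≤ 1 then
        (‖pt d ε w‖ ^ (d + 2))⁻¹ * (ε * (w k : ℝ)) * (ε * (w k : ℝ)) else 0 with hg
    have hsg : ∀ k, Summable (g k) := fun k => summable_aux d hε0 _ (fun w h => if_neg h)
    have heq : ∀ k l : Fin d, ∑' w, g k w = ∑' w, g l w := by
      intro k l
      set σ : (Fin d → ℤ) ≃ (Fin d → ℤ) := Equiv.arrowCongr (Equiv.swap k l) (Equiv.refl ℤ) with hσ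
      have hσ_apply : ∀ w : Fin d → ℤ, σ w = w ∘ Equiv.swap k l := by
        intro w
        funext m
        simp [hσ, Equiv.arrowCongr]
      calc ∑' w, g k w = ∑' w, g k (σ w) := (σ.tsum_eq (g k)).symm
        _ = ∑' w, g l w := by
          refine tsum_congr fun w => ?_
          rw [hσ_apply, hg]
          dsimp only
          rw [swap_norm]
          by_cases hc : w ≠ 0 ∧ ‖pt d ε w‖ ≤ 1
          · rw [if_pos ⟨(swap_ne_zero d k l w).2 hc.1, hc.2⟩, if_pos hc]
            simp [Function.comp, Equiv.swap_apply_left]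
          · rw [if_neg, if_neg hc]
            intro hc'
            exact hc ⟨(swap_ne_zero d k l w).1 hc'.1, hc'.2⟩
    have hinner : ∀ w, ∑ k, g k w = f₀ w := by
      intro w
      rw [hg, hf₀]
      dsimp only
      by_cases hc : w ≠ 0 ∧ ‖pt d ε w‖ ≤ 1
      · rw [if_pos hc]
        simp only [if_pos hc]
        have h0 : ‖pt d ε w‖ ≠ 0 := (pt_pos d hε0 hc.1).ne'
        have : ∑ k, ((‖pt d ε w‖ ^ (d + 2))⁻¹ * (ε * (w k : ℝ)) * (ε * (w k : ℝ)))
            = (‖pt d ε w‖ ^ (d + 2))⁻¹ * ∑ k, (ε * (w k : ℝ)) ^ 2 := by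
          rw [Finset.mul_sum]
          exact Finset.sum_congr rfl fun k _ => by ring
        rw [this, ← norm_pt_sq, pow_add]
        field_simp
      · rw [if_neg hc]
        simp only [if_neg hc]
        simp
    have htotal : ∑ k, ∑' w, g k w = T := by
      rw [← Summable.tsum_finsetSum (fun k _ => hsg k), hT]
      exact tsum_congr hinner
    have hconst : ∑ k : Fin d, ∑' w, g k w = d * ∑' w, g i w := by
      rw [Finset.sum_congr rfl (fun k _ => heq k i)]
      simp [Finset.sum_const, Finset.card_univ, nsmul_eq_mul]
    have hdpos : (0 : ℝ) < d := by exact_mod_cast hd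
    have hgi : ∑' w, g i w = T / d := by
      rw [eq_div_iff hdpos.ne']
      rw [← htotal, hconst]
      ring
    show ε ^ d / kappa d ε * ∑' w, g i w = 1 / d
    rw [hgi, hκ]
    have hε' : (0:ℝ) < ε ^ d := by positivity
    field_simp
  · -- off-diagonal case
    rw [if_neg hij]
    set F : (Fin d → ℤ) → ℝ := fun w =>
      if w ≠ 0 ∧ ‖pt d ε w‖ ≤ 1 then
        (‖pt d ε w‖ ^ (d + 2))⁻¹ * (ε * (w i : ℝ)) * (ε * (w j : ℝ)) else 0 with hF
    have key : ∀ w, F (negE d i w) = -F w := by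
      intro w
      rw [hF]
      dsimp only
      rw [negE_norm]
      by_cases hc : w ≠ 0 ∧ ‖pt d ε w‖ ≤ 1
      · rw [if_pos ⟨(negE_ne_zero d i w).2 hc.1, hc.2⟩, if_pos hc]
        rw [negE_apply, negE_apply, if_pos rfl, if_neg (Ne.symm hij)]
        push_cast
        ring
      · rw [if_neg, if_neg hc]
        · ring
        · intro hc'
          exact hc ⟨(negE_ne_zero d i w).1 hc'.1, hc'.2⟩
    have hzero : ∑' w, F w = 0 := by
      have h1 : ∑' w, F w = -∑' w, F w := by
        calc ∑' w, F w = ∑' w, F (negE d i w) := ((negE d i).tsum_eq F).symm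
          _ = ∑' w, -(F w) := tsum_congr key
          _ = -∑' w, F w := tsum_neg
      linarith
    rw [hzero]
    simp
end

section
/- Fix an integer d ≥ 1. For u, v ∈ ℤ^d with u ≠ v, let γ_{v→u} be the nearest-neighbour lattice path from v to u that changes coordinates one at a time in the order 1, …, d: first it moves the first coordinate from v_1 to u_1 by unit steps, then the second coordinate from v_2 to u_2, and so on. Then for every undirected nearest-neighbour edge e of ℤ^d and every z ∈ ℤ^d \ {0}, the number of pairs (u, v) ∈ ℤ^d × ℤ^d with v − u = z such that γ_{v→u} uses the edge e is at most |z|_1, the ℓ¹ norm of z. -/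
/-- `pathUses v u a b` says that the canonical nearest-neighbour lattice path `γ_{v→u}`
from `v` to `u` — which changes coordinates one at a time in the order `1, …, d`, moving
each coordinate from its value in `v` to its value in `u` by unit steps — uses the
undirected edge `{a, b}`.  Indeed, while coordinate `i` is being moved, the coordinates
`j < i` have already reached their final values `u j`, the coordinates `j > i` still have
their initial values `v j`, and the `i`-th coordinates of the two endpoints of a traversed
edge are distinct and lie between `v i` and `u i`. -/
def pathUses {d : ℕ} (v u a b : Fin d → ℤ) : Prop :=
  ∃ i : Fin d,
    (∀ j, j < i → a j = u j ∧ b j = u j) ∧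
    (∀ j, i < j → a j = v j ∧ b j = v j) ∧
    a i ≠ b i ∧
    min (v i) (u i) ≤ min (a i) (b i) ∧ max (a i) (b i) ≤ max (v i) (u i)

/-- for every undirected nearest-neighbour edge `e = {a, b}` of `ℤ^d`
(`|a − b|₁ = 1`) and every `z ∈ ℤ^d \ {0}`, the number of pairs `(u, v)` with `v − u = z`
such that the canonical path `γ_{v→u}` uses `e` is at most `|z|₁`. -/
theorem path_counting (d : ℕ) (hd : 1 ≤ d) (a b : Fin d → ℤ)
    (he : ∑ i : Fin d, (a i - b i).natAbs = 1) (z : Fin d → ℤ) (hz : z ≠ 0) :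
    {u : Fin d → ℤ | pathUses (u + z) u a b}.Finite ∧
    {u : Fin d → ℤ | pathUses (u + z) u a b}.ncard ≤ ∑ i : Fin d, (z i).natAbs := by
  -- Find the unique coordinate where a and b differ
  obtain ⟨i0, hi0⟩ : ∃ i0 : Fin d, (a i0 - b i0).natAbs ≠ 0 := by
    by_contra h
    push_neg at h
    have : ∑ i : Fin d, (a i - b i).natAbs = 0 := Finset.sum_eq_zero fun i _ => h i
    omega
  have key : ∀ j, j ≠ i0 → (a j - b j).natAbs = 0 := by
    intro j hj
    have hsub : ({i0, j} : Finset (Fin d)) ⊆ Finset.univ := by simp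
    have h2 : ∑ i ∈ ({i0, j} : Finset (Fin d)), (a i - b i).natAbs
        ≤ ∑ i : Fin d, (a i - b i).natAbs :=
      Finset.sum_le_sum_of_subset hsub
    rw [Finset.sum_pair (Ne.symm hj)] at h2
    omega
  have hi0' : (a i0 - b i0).natAbs = 1 := by
    have hsum : ∑ i : Fin d, (a i - b i).natAbs = (a i0 - b i0).natAbs :=
      Finset.sum_eq_single i0 (fun j _ hj => key j hj) (by simp)
    omega
  obtain ⟨m, hm⟩ : ∃ m : ℤ, m = min (a i0) (b i0) := ⟨_, rfl⟩
  have hM : max (a i0) (b i0) = m + 1 := by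
    rw [hm]; omega
  obtain ⟨t, ht⟩ : ∃ t : ℤ, t = z i0 := ⟨_, rfl⟩
  obtain ⟨lo, hlo⟩ : ∃ lo : ℤ, lo = m + 1 - max t 0 := ⟨_, rfl⟩
  obtain ⟨hi, hhi⟩ : ∃ hi : ℤ, hi = m - min t 0 := ⟨_, rfl⟩
  obtain ⟨S, hS⟩ : ∃ S : Set (Fin d → ℤ), S = {u : Fin d → ℤ | pathUses (u + z) u a b} :=
    ⟨_, rfl⟩
  rw [← hS]
  -- Structure of elements of S
  have struct : ∀ u ∈ S, (∀ j, j < i0 → u j = a j) ∧ (∀ j, i0 < j → u j = a j - z j) ∧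
      lo ≤ u i0 ∧ u i0 ≤ hi := by
    intro u hu
    rw [hS] at hu
    obtain ⟨i, h1, h2, h3, h4, h5⟩ := hu
    have hii0 : i = i0 := by
      by_contra h
      have := key i h
      have : a i = b i := by omega
      exact h3 this
    subst hii0
    refine ⟨fun j hj => ((h1 j hj).1).symm, fun j hj => ?_, ?_, ?_⟩
    · have := (h2 j hj).1
      simp only [Pi.add_apply] at this
      omega
    · simp only [Pi.add_apply] at h4 h5
      rw [hM] at h5
      omega
    · simp only [Pi.add_apply] at h4 h5
      rw [hM] at h5
      omega
  -- Injectivity of evaluation at i0 on S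
  have hinj : Set.InjOn (fun u => u i0) S := by
    intro u hu u' hu' heq
    obtain ⟨p1, p2, -, -⟩ := struct u hu
    obtain ⟨q1, q2, -, -⟩ := struct u' hu'
    funext j
    rcases lt_trichotomy j i0 with h | h | h
    · rw [p1 j h, q1 j h]
    · subst h; exact heq
    · rw [p2 j h, q2 j h]
  have himg : (fun u => u i0) '' S ⊆ Set.Icc lo hi := by
    rintro x ⟨u, hu, rfl⟩
    obtain ⟨-, -, h1, h2⟩ := struct u hu
    exact ⟨h1, h2⟩
  have hfin : S.Finite :=
    Set.Finite.of_finite_image ((Set.finite_Icc lo hi).subset himg) hinj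
  refine ⟨hfin, ?_⟩
  have h1 : S.ncard = ((fun u => u i0) '' S).ncard :=
    (Set.ncard_image_of_injOn hinj).symm
  have h2 : ((fun u => u i0) '' S).ncard ≤ (Set.Icc lo hi).ncard :=
    Set.ncard_le_ncard himg (Set.finite_Icc lo hi)
  have h3 : (Set.Icc lo hi).ncard = (z i0).natAbs := by
    rw [← Finset.coe_Icc, Set.ncard_coe_finset, Int.card_Icc]
    clear struct hinj himg hfin h1 h2 hS he hz
    omega
  have h4 : (z i0).natAbs ≤ ∑ i : Fin d, (z i).natAbs :=
    Finset.single_le_sum (f := fun i => (z i).natAbs) (fun i _ => Nat.zero_le _)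
      (Finset.mem_univ i0)
  rw [h1]
  exact le_trans h2 (le_trans (le_of_eq h3) h4)
end

section
/- Let d ≥ 1 be an integer and R > 0. There exists a constant C = C(d, R) < ∞ such that for every bounded open set U ⊂ ℝ^d with diameter at most R, every ε ∈ (0,1), and every function h : εℤ^d → ℝ with h(x) = 0 for all x ∈ εℤ^d \ U, one has ε^d · Σ_{x ∈ εℤ^d} h(x)² ≤ C · (ε^{2d} / κ_ε) · Σ_{x ∈ εℤ^d} Σ_{z ∈ εℤ^d \ {0}} |z|^{-(d+2)} (h(x+z) − h(x))². -/
lemma pt_apply (d : ℕ) (ε : ℝ) (w : Fin d → ℤ) (i : Fin d) : pt d ε w i = ε * (w i : ℝ) := rfl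

lemma pt_add (d : ℕ) (ε : ℝ) (a b : Fin d → ℤ) : pt d ε (a + b) = pt d ε a + pt d ε b := by
  ext i
  simp only [pt_apply, Pi.add_apply, PiLp.add_apply]
  push_cast
  ring

lemma pt_nsmul (d : ℕ) (ε : ℝ) (n : ℕ) (w : Fin d → ℤ) : pt d ε (n • w) = n • pt d ε w := by
  ext i
  have h1 : pt d ε (n • w) i = ε * (((n • w) i : ℤ) : ℝ) := rfl
  have h2 : (n • w) i = (n : ℤ) * w i := by simp
  have h3 : (n • pt d ε w) i = (n : ℝ) * (ε * (w i : ℝ)) := by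
    have : (n • pt d ε w) i = n • (pt d ε w i) := rfl
    rw [this, pt_apply, nsmul_eq_mul]
  rw [h1, h2, h3]
  push_cast
  ring

lemma pt_eq_smul (d : ℕ) (ε : ℝ) (w : Fin d → ℤ) : pt d ε w = ε • pt d 1 w := by
  ext i
  simp only [pt_apply, PiLp.smul_apply, smul_eq_mul]
  ring

lemma norm_pt (d : ℕ) (ε : ℝ) (hε : 0 ≤ ε) (w : Fin d → ℤ) :
    ‖pt d ε w‖ = ε * ‖pt d 1 w‖ := by
  rw [pt_eq_smul, norm_smul, Real.norm_eq_abs, abs_of_nonneg hε]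

lemma coord_le_norm (d : ℕ) (w : Fin d → ℤ) (i : Fin d) : |(w i : ℝ)| ≤ ‖pt d 1 w‖ := by
  rw [EuclideanSpace.norm_eq]
  have h1 : |(w i : ℝ)| = Real.sqrt (‖pt d 1 w i‖ ^ 2) := by
    rw [Real.sqrt_sq_eq_abs]
    simp [pt_apply]
  rw [h1]
  apply Real.sqrt_le_sqrt
  exact Finset.single_le_sum (f := fun j => ‖pt d 1 w j‖ ^ 2) (fun j _ => by positivity)
    (Finset.mem_univ i)

lemma one_le_norm_pt (d : ℕ) (w : Fin d → ℤ) (hw : w ≠ 0) : 1 ≤ ‖pt d 1 w‖ := by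
  obtain ⟨i, hi⟩ := Function.ne_iff.mp hw
  refine le_trans ?_ (coord_le_norm d w i)
  have : (1 : ℤ) ≤ |w i| := Int.one_le_abs (by simpa using hi)
  rw [← Int.cast_abs]
  exact_mod_cast this

lemma finite_norm_le (d : ℕ) (r : ℝ) : {w : Fin d → ℤ | ‖pt d 1 w‖ ≤ r}.Finite := by
  apply Set.Finite.subset (Set.finite_Icc (fun _ => -⌈r⌉ : Fin d → ℤ) fun _ => ⌈r⌉)
  intro w hw
  simp only [Set.mem_setOf_eq] at hw
  have key : ∀ i, -⌈r⌉ ≤ w i ∧ w i ≤ ⌈r⌉ := by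
    intro i
    have h1 : |(w i : ℝ)| ≤ r := le_trans (coord_le_norm d w i) hw
    have h2 : |w i| ≤ ⌈r⌉ := by
      have h3 : (|w i| : ℝ) ≤ (⌈r⌉ : ℤ) := by
        push_cast
        exact h1.trans (Int.le_ceil r)
      exact_mod_cast h3
    have := abs_le.mp h2
    exact this
  exact Set.mem_Icc.mpr ⟨fun i => (key i).1, fun i => (key i).2⟩

lemma summable_onedim {p : ℝ} (hp : 1 < p) :
    Summable (fun m : ℤ => ((1 + |(m : ℝ)|) ^ p)⁻¹) := by
  have h1 : Summable (fun m : ℤ => |(m : ℝ)| ^ (-p)) := Real.summable_abs_int_rpow hp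
  have h2 : Summable (fun m : ℤ => if m = 0 then (1 : ℝ) else 0) := by
    apply summable_of_ne_finset_zero (s := ({0} : Finset ℤ))
    intro m hm
    simp only [Finset.mem_singleton] at hm
    simp [hm]
  refine Summable.of_nonneg_of_le (fun m => by positivity) (fun m => ?_) (h1.add h2)
  by_cases hm : m = 0
  · subst hm
    simp only [Int.cast_zero, abs_zero, add_zero, if_pos rfl, Pi.add_apply]
    rw [Real.one_rpow, inv_one, Real.zero_rpow (by linarith), zero_add]
    simp
  · have hm' : (m : ℝ) ≠ 0 := Int.cast_ne_zero.mpr hm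
    have habs : 0 < |(m : ℝ)| := abs_pos.mpr hm'
    simp only [Pi.add_apply, if_neg hm, add_zero]
    rw [Real.rpow_neg (abs_nonneg _)]
    apply inv_anti₀ (Real.rpow_pos_of_pos habs p)
    exact Real.rpow_le_rpow (abs_nonneg _) (by linarith) (by linarith)

lemma summable_pi_prod {f : ℤ → ℝ} (hf : Summable f) (h0 : ∀ m, 0 ≤ f m) :
    ∀ n : ℕ, Summable (fun z : Fin n → ℤ => ∏ i, f (z i)) := by
  intro n
  induction n with
  | zero =>
    have : Finite (Fin 0 → ℤ) := Finite.of_subsingleton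
    exact Summable.of_finite
  | succ n ih =>
    have hprod : Summable (fun q : ℤ × (Fin n → ℤ) => f q.1 * ∏ i, f (q.2 i)) :=
      Summable.mul_of_nonneg (f := f) (g := fun z : Fin n → ℤ => ∏ i, f (z i)) hf ih h0
        (fun _ => Finset.prod_nonneg fun _ _ => h0 _)
    have h := (Fin.consEquiv fun _ : Fin (n + 1) => ℤ).symm.summable_iff.mpr hprod
    exact h.congr fun z => (Fin.prod_univ_succ fun i => f (z i)).symm

lemma summable_kernel (d : ℕ) (hd : 1 ≤ d) (ε : ℝ) (hε : 0 < ε) :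
    Summable (fun z : Fin d → ℤ => if z ≠ 0 then (‖pt d ε z‖ ^ (d + 2))⁻¹ else 0) := by
  have hdpos : (0 : ℝ) < d := by exact_mod_cast hd
  set p : ℝ := ((d : ℝ) + 2) / d with hp_def
  have hp1 : 1 < p := by
    rw [hp_def, lt_div_iff₀ hdpos]
    linarith
  have hone := summable_onedim hp1
  have hprod := summable_pi_prod hone (fun m => by positivity) d
  refine Summable.of_nonneg_of_le (fun z => ?_) (fun z => ?_)
    (hprod.mul_left ((ε ^ (d + 2))⁻¹ * 2 ^ (d + 2)))
  · split
    · positivity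
    · exact le_rfl
  · by_cases hz : z = 0
    · rw [if_neg (by simp [hz])]
      positivity
    · rw [if_pos hz]
      set L := ‖pt d 1 z‖ with hL
      have hL1 : 1 ≤ L := one_le_norm_pt d z hz
      have hL0 : 0 < L := by linarith
      have hnorm : ‖pt d ε z‖ = ε * L := norm_pt d ε hε.le z
      have hcoord : ∀ i, (1 : ℝ) + |(z i : ℝ)| ≤ 2 * L := by
        intro i
        have := coord_le_norm d z i
        rw [← hL] at this
        linarith
      have hprod_le : ∏ i, (1 + |(z i : ℝ)|) ≤ (2 * L) ^ d := by
        calc ∏ i, (1 + |(z i : ℝ)|) ≤ ∏ _i : Fin d, (2 * L) :=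
              Finset.prod_le_prod (fun i _ => by positivity) (fun i _ => hcoord i)
          _ = (2 * L) ^ d := by simp [Finset.prod_const, Finset.card_univ]
      have hrpow : (∏ i, (1 + |(z i : ℝ)|)) ^ p ≤ (2 * L) ^ (d + 2) := by
        have h1 : (∏ i, (1 + |(z i : ℝ)|)) ^ p ≤ ((2 * L) ^ d) ^ p :=
          Real.rpow_le_rpow (Finset.prod_nonneg fun i _ => by positivity) hprod_le
            (by positivity)
        have h2 : ((2 * L) ^ d) ^ p = (2 * L) ^ (d + 2) := by
          rw [← Real.rpow_natCast (2 * L) d, ← Real.rpow_mul (by positivity)]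
          rw [← Real.rpow_natCast (2 * L) (d + 2)]
          congr 1
          rw [hp_def]
          push_cast
          field_simp
        linarith
      set P := ∏ i, ((1 + |(z i : ℝ)|) ^ p)⁻¹ with hPdef
      have hQ : ((∏ i, (1 + |(z i : ℝ)|)) ^ p)⁻¹ = P := by
        rw [← Real.finset_prod_rpow _ _ (fun i _ => by positivity) p]
        exact (Finset.prod_inv_distrib _).symm
      have hQpos : 0 < (∏ i, (1 + |(z i : ℝ)|)) ^ p :=
        Real.rpow_pos_of_pos (Finset.prod_pos fun i _ => by positivity) p
      have hkey : (L ^ (d + 2))⁻¹ ≤ 2 ^ (d + 2) * P := by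
        rw [← hQ]
        calc (L ^ (d + 2))⁻¹
            = 2 ^ (d + 2) * ((2 : ℝ) ^ (d + 2) * L ^ (d + 2))⁻¹ := by
              rw [mul_inv, ← mul_assoc, mul_inv_cancel₀ (by positivity), one_mul]
          _ ≤ 2 ^ (d + 2) * ((∏ i, (1 + |(z i : ℝ)|)) ^ p)⁻¹ := by
              apply mul_le_mul_of_nonneg_left _ (by positivity)
              apply inv_anti₀ hQpos
              rw [← mul_pow]
              exact hrpow
      calc (‖pt d ε z‖ ^ (d + 2))⁻¹
          = (ε ^ (d + 2))⁻¹ * (L ^ (d + 2))⁻¹ := by rw [hnorm, mul_pow, mul_inv]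
        _ ≤ (ε ^ (d + 2))⁻¹ * (2 ^ (d + 2) * P) :=
            mul_le_mul_of_nonneg_left hkey (by positivity)
        _ = (ε ^ (d + 2))⁻¹ * 2 ^ (d + 2) * P := by ring


open scoped Classical in
noncomputable def kterm (d : ℕ) (ε : ℝ) (w : Fin d → ℤ) : ℝ :=
  if w ≠ 0 ∧ ‖pt d ε w‖ ≤ 1 then (‖pt d ε w‖ ^ d)⁻¹ else 0

lemma kappa_eq (d : ℕ) (ε : ℝ) : kappa d ε = ε ^ d * ∑' w, kterm d ε w := rfl

open scoped Classical in
/-- Poincaré inequality for the critical kernel: for `d ≥ 1` and `R > 0`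
there is `C = C(d, R)` such that for every bounded open `U ⊂ ℝ^d` with `diam U ≤ R`,
every `ε ∈ (0,1)`, and every `h : εℤ^d → ℝ` vanishing on `εℤ^d \ U`,
`ε^d Σ_x h(x)² ≤ C (ε^{2d}/κ_ε) Σ_x Σ_{z ≠ 0} |z|^{-(d+2)} (h(x+z) − h(x))²`.
Lattice points are indexed by `w ∈ ℤ^d`, the actual point being `pt d ε w = ε·w`. -/
theorem poincare_critical (d : ℕ) (hd : 1 ≤ d) (R : ℝ) (hR : 0 < R) :
    ∃ C : ℝ, ∀ U : Set (EuclideanSpace ℝ (Fin d)),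
      IsOpen U → Bornology.IsBounded U → Metric.diam U ≤ R →
      ∀ ε : ℝ, 0 < ε → ε < 1 →
      ∀ h : (Fin d → ℤ) → ℝ, (∀ w, pt d ε w ∉ U → h w = 0) →
      ε ^ d * ∑' w : Fin d → ℤ, (h w) ^ 2 ≤
        C * (ε ^ (2 * d) / kappa d ε) *
          ∑' q : (Fin d → ℤ) × (Fin d → ℤ),
            (if q.2 ≠ 0 then
              (‖pt d ε q.2‖ ^ (d + 2))⁻¹ * (h (q.1 + q.2) - h q.1) ^ 2 else 0) := by
  refine ⟨(R + 2) ^ 2, ?_⟩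
  intro U hUopen hUb hUdiam ε hε0 hε1 h hvan
  have hεle : (0 : ℝ) ≤ ε := hε0.le
  have hR2pos : (0 : ℝ) < (R + 2) ^ 2 := by positivity
  -- finite support of h
  obtain ⟨r, hr⟩ : ∃ r, U ⊆ Metric.closedBall 0 r :=
    (Metric.isBounded_iff_subset_closedBall 0).mp hUb
  have hSfin : {w : Fin d → ℤ | pt d ε w ∈ U}.Finite := by
    apply (finite_norm_le d (r / ε)).subset
    intro w hw
    have h1 : ‖pt d ε w‖ ≤ r := mem_closedBall_zero_iff.mp (hr hw)
    rw [norm_pt d ε hεle] at h1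
    exact (le_div_iff₀' hε0).mpr h1
  set Sf := hSfin.toFinset with hSf
  have hsupp : ∀ w, w ∉ Sf → h w = 0 := by
    intro w hw
    apply hvan
    intro hU
    exact hw ((Set.Finite.mem_toFinset hSfin).mpr hU)
  have hsq : Summable (fun w : Fin d → ℤ => h w ^ 2) :=
    summable_of_ne_finset_zero (s := Sf) (fun w hw => by rw [hsupp w hw]; ring)
  set T := ∑' w : Fin d → ℤ, h w ^ 2 with hT
  have hT0 : 0 ≤ T := tsum_nonneg fun w => sq_nonneg _
  -- summability of differences
  have hdiff : ∀ z : Fin d → ℤ, Summable (fun x => (h (x + z) - h x) ^ 2) := by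
    intro z
    apply summable_of_ne_finset_zero (s := Sf ∪ Sf.image (fun y => y - z))
    intro x hx
    rw [Finset.mem_union] at hx
    push_neg at hx
    have h1 : h x = 0 := hsupp x hx.1
    have h2 : h (x + z) = 0 :=
      hsupp _ (fun hmem => hx.2 (Finset.mem_image.mpr ⟨x + z, hmem, add_sub_cancel_right x z⟩))
    rw [h1, h2]
    ring
  set D : (Fin d → ℤ) → ℝ := fun z => ∑' x, (h (x + z) - h x) ^ 2 with hD
  have hD0 : ∀ z, 0 ≤ D z := fun z => tsum_nonneg fun x => sq_nonneg _
  have hbpos : ∀ w : Fin d → ℤ, w ≠ 0 → 0 < ‖pt d ε w‖ := by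
    intro w hw
    rw [norm_pt d ε hεle]
    have hL := one_le_norm_pt d w hw
    nlinarith
  -- Claim A : one-dimensional Poincaré along direction w
  have claimA : ∀ w : Fin d → ℤ, w ≠ 0 → ‖pt d ε w‖ ≤ 1 →
      T ≤ (R + 2) ^ 2 * (‖pt d ε w‖ ^ 2)⁻¹ * D w := by
    intro w hw hw1
    set b := ‖pt d ε w‖ with hb
    have hbp : 0 < b := hbpos w hw
    set N : ℕ := ⌈R / b⌉₊ + 1 with hN
    have hNcast : (N : ℝ) = (⌈R / b⌉₊ : ℝ) + 1 := by exact_mod_cast rfl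
    have hNb : R < (N : ℝ) * b := by
      have h1 : R / b ≤ (⌈R / b⌉₊ : ℝ) := Nat.le_ceil _
      rw [div_le_iff₀ hbp] at h1
      rw [hNcast]
      nlinarith
    have hNb2 : (N : ℝ) * b ≤ R + 2 := by
      have h1 : (⌈R / b⌉₊ : ℝ) < R / b + 1 := Nat.ceil_lt_add_one (by positivity)
      have h2 : R / b * b = R := div_mul_cancel₀ R hbp.ne'
      have h3 : (N : ℝ) < R / b + 2 := by rw [hNcast]; linarith
      nlinarith
    -- pointwise bound
    have hpoint : ∀ x : Fin d → ℤ, h x ^ 2 ≤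
        (N : ℝ) * ∑ k ∈ Finset.range N, (h (x + (k + 1) • w) - h (x + k • w)) ^ 2 := by
      intro x
      by_cases hx : h x = 0
      · rw [hx]
        have hz : (0 : ℝ) ^ 2 = 0 := by ring
        rw [hz]
        positivity
      · have hxU : pt d ε x ∈ U := by
          by_contra hc
          exact hx (hvan x hc)
        have hNU : pt d ε (x + N • w) ∉ U := by
          intro hmem
          have hdist : dist (pt d ε x) (pt d ε (x + N • w)) ≤ R :=
            le_trans (Metric.dist_le_diam_of_mem hUb hxU hmem) hUdiam
          have heq : dist (pt d ε x) (pt d ε (x + N • w)) = (N : ℝ) * b := by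
            rw [pt_add, pt_nsmul, dist_eq_norm]
            rw [show pt d ε x - (pt d ε x + N • pt d ε w) = -(N • pt d ε w) by abel]
            rw [norm_neg, RCLike.norm_nsmul ℝ, nsmul_eq_mul]
          rw [heq] at hdist
          linarith
        have h0 : h (x + N • w) = 0 := hvan _ hNU
        have htel : ∑ k ∈ Finset.range N, (h (x + (k + 1) • w) - h (x + k • w)) = -h x := by
          have hts := Finset.sum_range_sub (fun k => h (x + k • w)) N
          simp only [zero_nsmul, add_zero, h0] at hts
          rw [hts]
          ring
        have hCS := sq_sum_le_card_mul_sum_sq (s := Finset.range N)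
          (f := fun k => h (x + (k + 1) • w) - h (x + k • w))
        rw [htel] at hCS
        simpa [neg_sq, Finset.card_range] using hCS
    -- shifted differences all sum to D w
    have hshift : ∀ k : ℕ, Summable (fun x => (h (x + (k + 1) • w) - h (x + k • w)) ^ 2) ∧
        ∑' x, (h (x + (k + 1) • w) - h (x + k • w)) ^ 2 = D w := by
      intro k
      have hfun : ∀ x : Fin d → ℤ, (h (x + (k + 1) • w) - h (x + k • w)) ^ 2
          = (h ((x + k • w) + w) - h (x + k • w)) ^ 2 := by
        intro x
        rw [succ_nsmul, ← add_assoc]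
      have hcomp : Summable ((fun y => (h (y + w) - h y) ^ 2) ∘ (Equiv.addRight (k • w))) :=
        (Equiv.addRight (k • w)).summable_iff.mpr (hdiff w)
      constructor
      · apply hcomp.congr
        intro x
        simp only [Function.comp_apply, Equiv.coe_addRight]
        exact (hfun x).symm
      · rw [tsum_congr hfun]
        simp only [hD]
        have := (Equiv.addRight (k • w)).tsum_eq (fun y => (h (y + w) - h y) ^ 2)
        rw [← this]
        apply tsum_congr
        intro x
        simp only [Equiv.coe_addRight]
    -- T ≤ N² · D w
    have hTN : T ≤ (N : ℝ) ^ 2 * D w := by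
      have hsum_rhs : Summable (fun x => (N : ℝ) * ∑ k ∈ Finset.range N,
          (h (x + (k + 1) • w) - h (x + k • w)) ^ 2) := by
        apply Summable.mul_left
        apply summable_sum
        intro k _
        exact (hshift k).1
      have h1 : T ≤ ∑' x, (N : ℝ) * ∑ k ∈ Finset.range N,
          (h (x + (k + 1) • w) - h (x + k • w)) ^ 2 := Summable.tsum_le_tsum hpoint hsq hsum_rhs
      have h2 : ∑' x, (N : ℝ) * ∑ k ∈ Finset.range N,
          (h (x + (k + 1) • w) - h (x + k • w)) ^ 2
          = (N : ℝ) * ∑ k ∈ Finset.range N, ∑' x,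
            (h (x + (k + 1) • w) - h (x + k • w)) ^ 2 := by
        rw [tsum_mul_left]
        congr 1
        exact Summable.tsum_finsetSum (fun k _ => (hshift k).1)
      have h3 : ∑ k ∈ Finset.range N, ∑' x, (h (x + (k + 1) • w) - h (x + k • w)) ^ 2
          = (N : ℝ) * D w := by
        rw [Finset.sum_congr rfl (fun k _ => (hshift k).2)]
        rw [Finset.sum_const, Finset.card_range, nsmul_eq_mul]
      rw [h2, h3] at h1
      calc T ≤ (N : ℝ) * ((N : ℝ) * D w) := h1
        _ = (N : ℝ) ^ 2 * D w := by ring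
    have hN2 : (N : ℝ) ^ 2 ≤ (R + 2) ^ 2 * (b ^ 2)⁻¹ := by
      have h2 : (N : ℝ) ≤ (R + 2) / b := (le_div_iff₀ hbp).mpr hNb2
      have h3 : (N : ℝ) ^ 2 ≤ ((R + 2) / b) ^ 2 := by
        apply pow_le_pow_left₀ (by positivity) h2
      calc (N : ℝ) ^ 2 ≤ ((R + 2) / b) ^ 2 := h3
        _ = (R + 2) ^ 2 * (b ^ 2)⁻¹ := by rw [div_pow]; ring
    calc T ≤ (N : ℝ) ^ 2 * D w := hTN
      _ ≤ (R + 2) ^ 2 * (b ^ 2)⁻¹ * D w := mul_le_mul_of_nonneg_right hN2 (hD0 w)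
  -- the kernel and the big double sum
  have hK : Summable (fun z : Fin d → ℤ => if z ≠ 0 then (‖pt d ε z‖ ^ (d + 2))⁻¹ else 0) :=
    summable_kernel d hd ε hε0
  set K : (Fin d → ℤ) → ℝ := fun z => if z ≠ 0 then (‖pt d ε z‖ ^ (d + 2))⁻¹ else 0 with hKdef
  have hK0 : ∀ z, 0 ≤ K z := by
    intro z
    simp only [hKdef]
    split
    · positivity
    · exact le_rfl
  set F : (Fin d → ℤ) × (Fin d → ℤ) → ℝ := fun q =>
    if q.2 ≠ 0 then (‖pt d ε q.2‖ ^ (d + 2))⁻¹ * (h (q.1 + q.2) - h q.1) ^ 2 else 0 with hFdef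
  have hF0 : ∀ q, 0 ≤ F q := by
    intro q
    simp only [hFdef]
    split
    · positivity
    · exact le_rfl
  have hS1 : Summable (fun q : (Fin d → ℤ) × (Fin d → ℤ) => K q.2 * h q.1 ^ 2) := by
    have hmul := Summable.mul_of_nonneg (f := fun w : Fin d → ℤ => h w ^ 2) (g := K)
      hsq hK (fun w => sq_nonneg _) hK0
    exact hmul.congr fun q => mul_comm _ _
  have he2li : ∀ q : (Fin d → ℤ) × (Fin d → ℤ), ((q.1 + q.2 - q.2, q.2) : _ × _) = q := by
    intro q
    ext <;> simp
  have he2ri : ∀ q : (Fin d → ℤ) × (Fin d → ℤ), ((q.1 - q.2 + q.2, q.2) : _ × _) = q := by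
    intro q
    ext <;> simp
  set e2 : ((Fin d → ℤ) × (Fin d → ℤ)) ≃ ((Fin d → ℤ) × (Fin d → ℤ)) :=
    ⟨fun q => (q.1 + q.2, q.2), fun q => (q.1 - q.2, q.2),
      fun q => he2li q, fun q => he2ri q⟩ with he2
  have hS2 : Summable (fun q : (Fin d → ℤ) × (Fin d → ℤ) => K q.2 * h (q.1 + q.2) ^ 2) := by
    have h1 : Summable ((fun q : (Fin d → ℤ) × (Fin d → ℤ) => K q.2 * h q.1 ^ 2) ∘ e2) :=
      e2.summable_iff.mpr hS1
    exact h1.congr fun q => rfl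
  have hFsum : Summable F := by
    apply Summable.of_nonneg_of_le hF0 _ ((hS2.mul_left 2).add (hS1.mul_left 2))
    intro q
    simp only [hFdef]
    split
    · next hcond =>
      have hKq : K q.2 = (‖pt d ε q.2‖ ^ (d + 2))⁻¹ := by
        simp only [hKdef]
        rw [if_pos hcond]
      have hc : (0 : ℝ) ≤ (‖pt d ε q.2‖ ^ (d + 2))⁻¹ := by positivity
      have hab : (h (q.1 + q.2) - h q.1) ^ 2 ≤ 2 * h (q.1 + q.2) ^ 2 + 2 * h q.1 ^ 2 := by
        nlinarith [sq_nonneg (h (q.1 + q.2) + h q.1)]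
      calc (‖pt d ε q.2‖ ^ (d + 2))⁻¹ * (h (q.1 + q.2) - h q.1) ^ 2
          ≤ (‖pt d ε q.2‖ ^ (d + 2))⁻¹ * (2 * h (q.1 + q.2) ^ 2 + 2 * h q.1 ^ 2) :=
            mul_le_mul_of_nonneg_left hab hc
        _ = 2 * (K q.2 * h (q.1 + q.2) ^ 2) + 2 * (K q.2 * h q.1 ^ 2) := by rw [hKq]; ring
    · have h1 := mul_nonneg (hK0 q.2) (sq_nonneg (h (q.1 + q.2)))
      have h2 := mul_nonneg (hK0 q.2) (sq_nonneg (h q.1))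
      linarith
  -- fiberwise sums
  have hfiber : ∀ z, Summable (fun x => F (x, z)) := by
    intro z
    by_cases hz : z = 0
    · apply summable_zero.congr
      intro x
      simp [hFdef, hz]
    · have hEq : (fun x => F (x, z)) = fun x => (‖pt d ε z‖ ^ (d + 2))⁻¹ * (h (x + z) - h x) ^ 2 := by
        funext x
        simp only [hFdef]
        rw [if_pos hz]
      rw [hEq]
      exact (hdiff z).mul_left _
  set Φ : (Fin d → ℤ) → ℝ := fun z => ∑' x, F (x, z) with hPhi
  set G : ((Fin d → ℤ) × (Fin d → ℤ)) → ℝ := fun p => F (p.2, p.1) with hG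
  have hGsum : Summable G := by
    have h1 : Summable (F ∘ (Equiv.prodComm (Fin d → ℤ) (Fin d → ℤ))) :=
      (Equiv.prodComm _ _).summable_iff.mpr hFsum
    exact h1.congr fun p => rfl
  have hPhiHasSum : HasSum Φ (∑' p, G p) := by
    apply HasSum.prod_fiberwise hGsum.hasSum
    intro z
    exact (hfiber z).hasSum
  have hPhiSum : Summable Φ := hPhiHasSum.summable
  have htsumF : (∑' q, F q) = ∑' z, Φ z := by
    have h1 : ∑' z, Φ z = ∑' p, G p := hPhiHasSum.tsum_eq
    have h2 : ∑' p, G p = ∑' q, F q := by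
      have h3 := (Equiv.prodComm (Fin d → ℤ) (Fin d → ℤ)).tsum_eq F
      rw [← h3]
      apply tsum_congr
      intro p
      rfl
    rw [h1, h2]
  -- κ₀
  have hkterm_sum : Summable (kterm d ε) := by
    apply summable_of_ne_finset_zero (s := (finite_norm_le d (1 / ε)).toFinset)
    intro z hz
    simp only [Set.Finite.mem_toFinset, Set.mem_setOf_eq] at hz
    rw [kterm, if_neg]
    rintro ⟨h1, h2⟩
    apply hz
    rw [norm_pt d ε hεle] at h2
    exact (le_div_iff₀' hε0).mpr h2
  have hkterm0 : ∀ z, 0 ≤ kterm d ε z := by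
    intro z
    rw [kterm]
    split
    · positivity
    · exact le_rfl
  set κ₀ := ∑' z, kterm d ε z with hκ₀
  have hκ : kappa d ε = ε ^ d * κ₀ := kappa_eq d ε
  have hi0 : (0 : ℕ) < d := hd
  set i0 : Fin d := ⟨0, hi0⟩ with hi0def
  set z0 : Fin d → ℤ := Pi.single i0 1 with hz0
  have hz0ne : z0 ≠ 0 := by
    intro hc
    have h1 := congrFun hc i0
    simp [hz0, Pi.single_apply] at h1
  have hz0norm : ‖pt d ε z0‖ = ε := by
    rw [EuclideanSpace.norm_eq]
    have hcoords : ∀ i, ‖pt d ε z0 i‖ ^ 2 = if i = i0 then ε ^ 2 else 0 := by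
      intro i
      by_cases hi : i = i0 <;>
        simp [pt_apply, hz0, Pi.single_apply, hi, Real.norm_eq_abs, sq_abs]
    rw [Finset.sum_congr rfl fun i _ => hcoords i, Finset.sum_ite_eq' Finset.univ i0 _]
    simp [Real.sqrt_sq hεle]
  have hterm : kterm d ε z0 = (ε ^ d)⁻¹ := by
    rw [kterm, if_pos ⟨hz0ne, by rw [hz0norm]; linarith⟩, hz0norm]
  have hκ₀pos : 0 < κ₀ := by
    have h1 : (ε ^ d)⁻¹ ≤ κ₀ := by
      rw [← hterm]
      exact Summable.le_tsum hkterm_sum z0 (fun j _ => hkterm0 j)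
    have h2 : (0 : ℝ) < (ε ^ d)⁻¹ := by positivity
    linarith
  -- ψ ≤ Φ
  have hψle : ∀ z, (((R + 2) ^ 2)⁻¹ * T) * kterm d ε z ≤ Φ z := by
    intro z
    rw [kterm]
    by_cases hc : z ≠ 0 ∧ ‖pt d ε z‖ ≤ 1
    · rw [if_pos hc]
      obtain ⟨hz, hz1⟩ := hc
      have hΦz : Φ z = (‖pt d ε z‖ ^ (d + 2))⁻¹ * D z := by
        simp only [hPhi]
        have hEq : ∀ x, F (x, z) = (‖pt d ε z‖ ^ (d + 2))⁻¹ * (h (x + z) - h x) ^ 2 := by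
          intro x
          simp only [hFdef]
          rw [if_pos hz]
        rw [tsum_congr hEq, tsum_mul_left]
      rw [hΦz]
      set b := ‖pt d ε z‖ with hb
      have hclaim := claimA z hz hz1
      have hb2 : (b ^ (d + 2))⁻¹ = (b ^ d)⁻¹ * (b ^ 2)⁻¹ := by rw [pow_add, mul_inv]
      rw [hb2]
      have h1 : ((R + 2) ^ 2)⁻¹ * T ≤ (b ^ 2)⁻¹ * D z := by
        have h2 : ((R + 2) ^ 2)⁻¹ * T ≤ ((R + 2) ^ 2)⁻¹ * ((R + 2) ^ 2 * (b ^ 2)⁻¹ * D z) :=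
          mul_le_mul_of_nonneg_left hclaim (by positivity)
        have h3 : ((R + 2) ^ 2)⁻¹ * ((R + 2) ^ 2 * (b ^ 2)⁻¹ * D z) = (b ^ 2)⁻¹ * D z := by
          field_simp
        linarith
      calc ((R + 2) ^ 2)⁻¹ * T * (b ^ d)⁻¹ = (b ^ d)⁻¹ * (((R + 2) ^ 2)⁻¹ * T) := by ring
        _ ≤ (b ^ d)⁻¹ * ((b ^ 2)⁻¹ * D z) := mul_le_mul_of_nonneg_left h1 (by positivity)
        _ = (b ^ d)⁻¹ * (b ^ 2)⁻¹ * D z := by ring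
    · rw [if_neg hc, mul_zero]
      exact tsum_nonneg fun x => hF0 (x, z)
  have hψsum : Summable (fun z => (((R + 2) ^ 2)⁻¹ * T) * kterm d ε z) :=
    hkterm_sum.mul_left _
  have hmainge : (((R + 2) ^ 2)⁻¹ * T) * κ₀ ≤ ∑' q, F q := by
    rw [htsumF]
    calc (((R + 2) ^ 2)⁻¹ * T) * κ₀
        = ∑' z, (((R + 2) ^ 2)⁻¹ * T) * kterm d ε z := tsum_mul_left.symm
      _ ≤ ∑' z, Φ z := Summable.tsum_le_tsum hψle hψsum hPhiSum
  have hκpos : 0 < kappa d ε := by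
    rw [hκ]
    positivity
  have hfinal : (R + 2) ^ 2 * (ε ^ (2 * d) / kappa d ε) * ((((R + 2) ^ 2)⁻¹ * T) * κ₀)
      = ε ^ d * T := by
    rw [hκ]
    have hεd : ε ^ (2 * d) = ε ^ d * ε ^ d := by rw [two_mul, pow_add]
    rw [hεd]
    field_simp
  calc ε ^ d * T
      = (R + 2) ^ 2 * (ε ^ (2 * d) / kappa d ε) * ((((R + 2) ^ 2)⁻¹ * T) * κ₀) := hfinal.symm
    _ ≤ (R + 2) ^ 2 * (ε ^ (2 * d) / kappa d ε) * ∑' q, F q := by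
        apply mul_le_mul_of_nonneg_left hmainge
        exact mul_nonneg (by positivity) (div_nonneg (by positivity) hκpos.le)
end

section
/- Let d ≥ 1 be an integer. There exists a constant C = C(d) < ∞ such that for every bounded open set U ⊂ ℝ^d, every ε ∈ (0,1), every integer k ≥ 0 with ε·3^k ≤ diam(U), and every function h : εℤ^d → ℝ with h(x) = 0 for all x ∈ εℤ^d \ U, one has ε^d · Σ_{x ∈ εℤ^d} h(x)² ≤ C · diam(U)² · ε^{2d} · Σ_{x ∈ εℤ^d} Σ_{z ∈ εℤ^d, ε·3^k ≤ ‖z‖_∞ < ε·3^{k+1}} |z|^{-(d+2)} (h(x+z) − h(x))². -/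
/-- The rescaled lattice point `ε·w` viewed in `ℝ^d` with the supremum norm `‖·‖_∞`. -/
noncomputable def ptSup (d : ℕ) (ε : ℝ) (w : Fin d → ℤ) : Fin d → ℝ :=
  fun i => ε * (w i : ℝ)

set_option maxHeartbeats 1000000


lemma euclid_coord_le {d : ℕ} (x : EuclideanSpace ℝ (Fin d)) (i : Fin d) : |x i| ≤ ‖x‖ := by
  rw [EuclideanSpace.norm_eq, ← Real.sqrt_sq (abs_nonneg (x i))]
  apply Real.sqrt_le_sqrt
  have h1 : |x i| ^ 2 = ‖x i‖ ^ 2 := by rw [Real.norm_eq_abs]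
  rw [h1]
  exact Finset.single_le_sum (f := fun j => ‖x j‖ ^ 2) (fun j _ => by positivity)
    (Finset.mem_univ i)

lemma euclid_norm_le {d : ℕ} (x : EuclideanSpace ℝ (Fin d)) {a : ℝ} (ha : 0 ≤ a)
    (hx : ∀ i, |x i| ≤ a) : ‖x‖ ≤ Real.sqrt d * a := by
  rw [EuclideanSpace.norm_eq]
  have h1 : ∑ i, ‖x i‖ ^ 2 ≤ (d : ℝ) * a ^ 2 := by
    calc ∑ i, ‖x i‖ ^ 2 ≤ ∑ _i : Fin d, a ^ 2 := by
          apply Finset.sum_le_sum; intro i _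
          rw [Real.norm_eq_abs]
          exact pow_le_pow_left₀ (abs_nonneg _) (hx i) 2
      _ = (d : ℝ) * a ^ 2 := by simp [Finset.card_univ]
  calc Real.sqrt (∑ i, ‖x i‖ ^ 2) ≤ Real.sqrt ((d : ℝ) * a ^ 2) := Real.sqrt_le_sqrt h1
    _ = Real.sqrt d * a := by
        rw [Real.sqrt_mul (Nat.cast_nonneg d), Real.sqrt_sq ha]


open scoped Classical in
/-- single-scale estimate: for `d ≥ 1` there is `C = C(d)` such that for
every bounded open `U ⊂ ℝ^d`, every `ε ∈ (0,1)`, every integer `k ≥ 0` with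
`ε·3^k ≤ diam U`, and every `h : εℤ^d → ℝ` vanishing on `εℤ^d \ U`,
`ε^d Σ_x h(x)² ≤ C diam(U)² ε^{2d} Σ_x Σ_{ε3^k ≤ ‖z‖_∞ < ε3^{k+1}} |z|^{-(d+2)} (h(x+z) − h(x))²`. -/
theorem single_scale_estimate (d : ℕ) (hd : 1 ≤ d) :
    ∃ C : ℝ, ∀ U : Set (EuclideanSpace ℝ (Fin d)),
      IsOpen U → Bornology.IsBounded U →
      ∀ ε : ℝ, 0 < ε → ε < 1 →
      ∀ k : ℕ, ε * 3 ^ k ≤ Metric.diam U →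
      ∀ h : (Fin d → ℤ) → ℝ, (∀ w, pt d ε w ∉ U → h w = 0) →
      ε ^ d * ∑' w : Fin d → ℤ, (h w) ^ 2 ≤
        C * Metric.diam U ^ 2 * ε ^ (2 * d) *
          ∑' q : (Fin d → ℤ) × (Fin d → ℤ),
            (if ε * 3 ^ k ≤ ‖ptSup d ε q.2‖ ∧ ‖ptSup d ε q.2‖ < ε * 3 ^ (k + 1) then
              (‖pt d ε q.2‖ ^ (d + 2))⁻¹ * (h (q.1 + q.2) - h q.1) ^ 2 else 0) := by
  refine ⟨9 * (3 * Real.sqrt d) ^ (d + 2), ?_⟩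
  intro U _hUopen hUbd ε hε _hε1 k hkdiam h hh
  set R := Metric.diam U with hRdef
  have h3k : (0:ℝ) < 3 ^ k := by positivity
  have hE : 0 < ε * 3 ^ k := by positivity
  have hR : 0 < R := lt_of_lt_of_le hE hkdiam
  have hdpos : 0 < d := hd
  have hs : 0 < Real.sqrt d := Real.sqrt_pos.2 (by exact_mod_cast hdpos)
  set i0 : Fin d := ⟨0, hdpos⟩ with hi0
  -- the support finset
  obtain ⟨R0, hR0⟩ := hUbd.subset_closedBall 0
  set N : ℕ := ⌈R0 / ε⌉₊ with hNdef
  set B : Finset (Fin d → ℤ) := Fintype.piFinset fun _ => Finset.Icc (-(N:ℤ)) N with hBdef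
  have hmemB : ∀ w : Fin d → ℤ, pt d ε w ∈ U → w ∈ B := by
    intro w hw
    have hnorm : ‖pt d ε w‖ ≤ R0 := by
      have := hR0 hw
      rwa [Metric.mem_closedBall, dist_zero_right] at this
    rw [hBdef, Fintype.mem_piFinset]
    intro i
    rw [Finset.mem_Icc, ← abs_le]
    have h1 : |pt d ε w i| ≤ R0 := (euclid_coord_le _ i).trans hnorm
    have h2 : pt d ε w i = ε * (w i : ℝ) := rfl
    rw [h2, abs_mul, abs_of_pos hε] at h1
    have h3 : |(w i : ℝ)| ≤ (N : ℝ) := by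
      have h4 : |(w i : ℝ)| ≤ R0 / ε := (le_div_iff₀' hε).2 h1
      exact h4.trans (Nat.le_ceil _)
    exact_mod_cast h3
  have hzeroB : ∀ w ∉ B, h w = 0 := fun w hw => hh w fun hU => hw (hmemB w hU)
  have hsummable : ∀ a b : Fin d → ℤ, Summable fun w => (h (w + a) - h (w + b)) ^ 2 := by
    intro a b
    apply summable_of_ne_finset_zero (s := B.image (· - a) ∪ B.image (· - b))
    intro w hw
    simp only [Finset.mem_union, Finset.mem_image, not_or, not_exists, not_and] at hw
    have h1 : h (w + a) = 0 := hzeroB _ fun hmem => hw.1 (w + a) hmem (add_sub_cancel_right w a)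
    have h2 : h (w + b) = 0 := hzeroB _ fun hmem => hw.2 (w + b) hmem (add_sub_cancel_right w b)
    rw [h1, h2]; ring
  have hsumH : Summable fun w : Fin d → ℤ => (h w) ^ 2 :=
    summable_of_ne_finset_zero (s := B) fun w hw => by rw [hzeroB w hw]; ring
  set H : ℝ := ∑' w : Fin d → ℤ, h w ^ 2 with hHdef
  have hHnn : 0 ≤ H := tsum_nonneg fun w => sq_nonneg _
  set D : (Fin d → ℤ) → ℝ := fun z => ∑' x, (h (x + z) - h x) ^ 2 with hDdef
  have hDnn : ∀ z, 0 ≤ D z := fun z => tsum_nonneg fun x => sq_nonneg _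
  have hDsum : ∀ z : Fin d → ℤ, Summable fun x => (h (x + z) - h x) ^ 2 := by
    intro z
    have := hsummable z 0
    simpa using this
  -- the number of steps in the chain
  set M : ℕ := ⌈R / (ε * 3 ^ k)⌉₊ + 1 with hMdef
  have hMpos : 0 < M := Nat.succ_pos _
  have hMR : 0 < (M:ℝ) := by exact_mod_cast hMpos
  have hx1 : (1:ℝ) ≤ R / (ε * 3 ^ k) := (one_le_div hE).2 hkdiam
  have hM1 : R < (M:ℝ) * (ε * 3 ^ k) := by
    have h1 : R / (ε * 3 ^ k) < (M:ℝ) := by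
      rw [hMdef]; push_cast
      have := Nat.le_ceil (R / (ε * 3 ^ k)); linarith
    calc R = R / (ε * 3 ^ k) * (ε * 3 ^ k) := by field_simp
      _ < (M:ℝ) * (ε * 3 ^ k) := mul_lt_mul_of_pos_right h1 hE
  have hM2 : (M:ℝ) * (ε * 3 ^ k) ≤ 3 * R := by
    have h1 : (M:ℝ) ≤ 3 * (R / (ε * 3 ^ k)) := by
      rw [hMdef]; push_cast
      have h2 := Nat.ceil_lt_add_one (le_trans zero_le_one hx1)
      linarith
    calc (M:ℝ) * (ε * 3 ^ k) ≤ 3 * (R / (ε * 3 ^ k)) * (ε * 3 ^ k) :=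
          mul_le_mul_of_nonneg_right h1 hE.le
      _ = 3 * R := by field_simp
  -- the box of z's inside the annulus
  set S : Finset (Fin d → ℤ) := Fintype.piFinset fun _ => Finset.Icc ((3:ℤ) ^ k) (2 * 3 ^ k - 1)
    with hSdef
  have hScard : S.card = (3 ^ k) ^ d := by
    rw [hSdef, Fintype.card_piFinset]
    have h1 : (Finset.Icc ((3:ℤ) ^ k) (2 * 3 ^ k - 1)).card = 3 ^ k := by
      rw [Int.card_Icc]
      have h2 : 2 * (3:ℤ) ^ k - 1 + 1 - 3 ^ k = ((3 ^ k : ℕ) : ℤ) := by push_cast; ring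
      rw [h2, Int.toNat_natCast]
    simp [h1]
  have hSmem : ∀ z ∈ S, ∀ i, (3:ℤ) ^ k ≤ z i ∧ z i ≤ 2 * 3 ^ k - 1 := by
    intro z hz i
    rw [hSdef, Fintype.mem_piFinset] at hz
    exact Finset.mem_Icc.mp (hz i)
  have hzabs : ∀ z ∈ S, ∀ i, |(z i : ℝ)| ≤ 2 * 3 ^ k - 1 := by
    intro z hz i
    obtain ⟨ha, hb⟩ := hSmem z hz i
    have hz0 : (0:ℤ) < z i := lt_of_lt_of_le (by positivity) ha
    rw [abs_of_pos (by exact_mod_cast hz0)]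
    exact_mod_cast hb
  have h2lt : (2:ℝ) * 3 ^ k - 1 < 3 ^ (k + 1) := by
    rw [pow_succ]; nlinarith
  have hcond : ∀ z ∈ S,
      ε * 3 ^ k ≤ ‖ptSup d ε z‖ ∧ ‖ptSup d ε z‖ < ε * 3 ^ (k + 1) := by
    intro z hz
    constructor
    · have h1 : ‖ptSup d ε z i0‖ ≤ ‖ptSup d ε z‖ := norm_le_pi_norm (ptSup d ε z) i0
      have h3 : (3:ℝ) ^ k ≤ (z i0 : ℝ) := by exact_mod_cast (hSmem z hz i0).1
      calc ε * 3 ^ k ≤ ε * (z i0 : ℝ) := by nlinarith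
        _ ≤ |ε * (z i0 : ℝ)| := le_abs_self _
        _ = ‖ptSup d ε z i0‖ := (Real.norm_eq_abs _).symm
        _ ≤ ‖ptSup d ε z‖ := h1
    · rw [pi_norm_lt_iff (by positivity)]
      intro i
      have h1 : |(z i : ℝ)| ≤ 2 * 3 ^ k - 1 := hzabs z hz i
      have h2 : ‖ptSup d ε z i‖ = ε * |(z i : ℝ)| := by
        rw [Real.norm_eq_abs]
        show |ε * (z i : ℝ)| = _
        rw [abs_mul, abs_of_pos hε]
      rw [h2]
      have := h2lt
      nlinarith
  have hptpos : ∀ z ∈ S, 0 < ‖pt d ε z‖ := by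
    intro z hz
    have h3 : (3:ℝ) ^ k ≤ (z i0 : ℝ) := by exact_mod_cast (hSmem z hz i0).1
    have h1 : ε * 3 ^ k ≤ |pt d ε z i0| := by
      have h2 : pt d ε z i0 = ε * (z i0 : ℝ) := rfl
      rw [h2]
      calc ε * 3 ^ k ≤ ε * (z i0 : ℝ) := by nlinarith
        _ ≤ |ε * (z i0 : ℝ)| := le_abs_self _
    calc (0:ℝ) < ε * 3 ^ k := hE
      _ ≤ |pt d ε z i0| := h1
      _ ≤ ‖pt d ε z‖ := euclid_coord_le _ i0
  have hptupper : ∀ z ∈ S, ‖pt d ε z‖ ≤ Real.sqrt d * (ε * 3 ^ (k + 1)) := by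
    intro z hz
    apply euclid_norm_le _ (by positivity)
    intro i
    have h1 : |(z i : ℝ)| ≤ 2 * 3 ^ k - 1 := hzabs z hz i
    have h2 : pt d ε z i = ε * (z i : ℝ) := rfl
    rw [h2, abs_mul, abs_of_pos hε]
    nlinarith [h2lt]
  -- the chain estimate
  have hchain : ∀ z ∈ S, H ≤ (M:ℝ) ^ 2 * D z := by
    intro z hz
    have hzi0 : (3:ℝ) ^ k ≤ (z i0 : ℝ) := by exact_mod_cast (hSmem z hz i0).1
    have hout : ∀ w : Fin d → ℤ, pt d ε w ∈ U → h (w + M • z) = 0 := by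
      intro w hw
      apply hh
      intro hcon
      have hdist : dist (pt d ε (w + M • z)) (pt d ε w) ≤ R :=
        Metric.dist_le_diam_of_mem hUbd hcon hw
      have hco : (pt d ε (w + M • z) - pt d ε w) i0 = ε * ((M:ℝ) * (z i0 : ℝ)) := by
        show ε * (((w + M • z) i0 : ℤ) : ℝ) - ε * ((w i0 : ℤ) : ℝ) = _
        have h5 : (w + M • z) i0 = w i0 + (M:ℤ) * z i0 := rfl
        rw [h5]; push_cast; ring
      have h1 : (M:ℝ) * (ε * 3 ^ k) ≤ dist (pt d ε (w + M • z)) (pt d ε w) := by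
        rw [dist_eq_norm]
        calc (M:ℝ) * (ε * 3 ^ k) ≤ ε * ((M:ℝ) * (z i0 : ℝ)) := by nlinarith
          _ ≤ |(pt d ε (w + M • z) - pt d ε w) i0| := by rw [hco]; exact le_abs_self _
          _ ≤ ‖pt d ε (w + M • z) - pt d ε w‖ := euclid_coord_le _ i0
      linarith
    have hpt : ∀ w : Fin d → ℤ,
        (h w) ^ 2 ≤ (M:ℝ) * ∑ m ∈ Finset.range M, (h (w + (m+1) • z) - h (w + m • z)) ^ 2 := by
      intro w
      by_cases hw : pt d ε w ∈ U
      · have h0 : h (w + M • z) = 0 := hout w hw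
        have tel : ∑ m ∈ Finset.range M, (h (w + (m+1) • z) - h (w + m • z)) = -h w := by
          rw [Finset.sum_range_sub (fun m => h (w + m • z)) M]
          show h (w + M • z) - h (w + 0 • z) = -h w
          rw [h0, zero_smul, add_zero]; ring
        have hcs := sq_sum_le_card_mul_sum_sq (s := Finset.range M)
          (f := fun m => h (w + (m+1) • z) - h (w + m • z))
        rw [tel] at hcs
        simpa [Finset.card_range, neg_sq] using hcs
      · rw [hh w hw]
        have h9 : (0:ℝ) ^ 2 = 0 := by ring
        rw [h9]
        positivity
    have hsum_each : ∀ m : ℕ, Summable fun w => (h (w + (m+1) • z) - h (w + m • z)) ^ 2 :=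
      fun m => hsummable ((m+1) • z) (m • z)
    have hRHSsum : Summable fun w : Fin d → ℤ =>
        (M:ℝ) * ∑ m ∈ Finset.range M, (h (w + (m+1) • z) - h (w + m • z)) ^ 2 :=
      (summable_sum fun m _ => hsum_each m).mul_left _
    have step3 : ∀ m : ℕ, ∑' w : Fin d → ℤ, (h (w + (m+1) • z) - h (w + m • z)) ^ 2 = D z := by
      intro m
      have heq := (Equiv.addRight (m • z)).tsum_eq (f := fun w => (h (w + z) - h w) ^ 2)
      have hDz : D z = ∑' (b : Fin d → ℤ), (h (b + z) - h b) ^ 2 := rfl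
      rw [hDz, ← heq]
      apply tsum_congr
      intro w
      have e1 : w + (m+1) • z = (Equiv.addRight (m • z)) w + z := by
        show w + (m+1) • z = w + m • z + z
        rw [succ_nsmul, add_assoc]
      have e2 : w + m • z = (Equiv.addRight (m • z)) w := rfl
      rw [e1, e2]
    calc H ≤ ∑' w : Fin d → ℤ,
          (M:ℝ) * ∑ m ∈ Finset.range M, (h (w + (m+1) • z) - h (w + m • z)) ^ 2 :=
        Summable.tsum_le_tsum hpt hsumH hRHSsum
      _ = (M:ℝ) * ∑' w : Fin d → ℤ,
          ∑ m ∈ Finset.range M, (h (w + (m+1) • z) - h (w + m • z)) ^ 2 := tsum_mul_left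
      _ = (M:ℝ) * ∑ m ∈ Finset.range M,
          ∑' w : Fin d → ℤ, (h (w + (m+1) • z) - h (w + m • z)) ^ 2 := by
        rw [Summable.tsum_finsetSum fun m _ => hsum_each m]
      _ = (M:ℝ) * ∑ m ∈ Finset.range M, D z := by
        rw [Finset.sum_congr rfl fun m _ => step3 m]
      _ = (M:ℝ) * ((M:ℝ) * D z) := by
        rw [Finset.sum_const, Finset.card_range, nsmul_eq_mul]
      _ = (M:ℝ) ^ 2 * D z := by ring
  -- annulus superset and support finsets for the double sum
  set Ann : Finset (Fin d → ℤ) :=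
    Fintype.piFinset fun _ => Finset.Icc (-(3:ℤ) ^ (k + 1)) (3 ^ (k + 1)) with hAnndef
  have hAnn : ∀ z : Fin d → ℤ, ‖ptSup d ε z‖ < ε * 3 ^ (k + 1) → z ∈ Ann := by
    intro z hzn
    rw [hAnndef, Fintype.mem_piFinset]
    intro i
    rw [Finset.mem_Icc, ← abs_le]
    have h2 : ‖ptSup d ε z i‖ ≤ ‖ptSup d ε z‖ := norm_le_pi_norm _ i
    have h3 : ‖ptSup d ε z i‖ = ε * |(z i : ℝ)| := by
      rw [Real.norm_eq_abs]
      show |ε * (z i : ℝ)| = _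
      rw [abs_mul, abs_of_pos hε]
    rw [h3] at h2
    have h4 : |(z i : ℝ)| < 3 ^ (k + 1) := by nlinarith
    have h5 : |(z i : ℝ)| ≤ (((3:ℤ) ^ (k + 1) : ℤ) : ℝ) := by push_cast; linarith
    exact_mod_cast h5
  set X : Finset (Fin d → ℤ) := B ∪ (B ×ˢ Ann).image (fun p => p.1 - p.2) with hXdef
  set F : (Fin d → ℤ) × (Fin d → ℤ) → ℝ := fun q =>
    if ε * 3 ^ k ≤ ‖ptSup d ε q.2‖ ∧ ‖ptSup d ε q.2‖ < ε * 3 ^ (k + 1) then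
      (‖pt d ε q.2‖ ^ (d + 2))⁻¹ * (h (q.1 + q.2) - h q.1) ^ 2 else 0 with hFdef
  have hFnn : ∀ q : (Fin d → ℤ) × (Fin d → ℤ), 0 ≤ F q := by
    intro q
    rw [hFdef]
    dsimp only
    split_ifs with hcnd
    · positivity
    · exact le_refl 0
  have hFz : ∀ x z : Fin d → ℤ, z ∉ Ann → F (x, z) = 0 := by
    intro x z hzA
    rw [hFdef]
    dsimp only
    rw [if_neg]
    intro hcnd
    exact hzA (hAnn z hcnd.2)
  have hXmem : ∀ x z : Fin d → ℤ, z ∈ Ann → x ∉ X → h (x + z) - h x = 0 := by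
    intro x z hzA hx
    rw [hXdef, Finset.mem_union] at hx
    push_neg at hx
    have h1 : h x = 0 := hzeroB x fun hmem => hx.1 hmem
    have h2 : h (x + z) = 0 := by
      apply hzeroB
      intro hmem
      exact hx.2 (Finset.mem_image.mpr
        ⟨(x + z, z), Finset.mem_product.mpr ⟨hmem, hzA⟩, add_sub_cancel_right x z⟩)
    rw [h1, h2, sub_zero]
  have hFx : ∀ x z : Fin d → ℤ, x ∉ X → F (x, z) = 0 := by
    intro x z hx
    rw [hFdef]
    dsimp only
    by_cases hcnd : ε * 3 ^ k ≤ ‖ptSup d ε z‖ ∧ ‖ptSup d ε z‖ < ε * 3 ^ (k + 1)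
    · rw [if_pos hcnd, hXmem x z (hAnn z hcnd.2) hx]
      ring
    · rw [if_neg hcnd]
  have hFsupp : ∀ q ∉ X ×ˢ Ann, F q = 0 := by
    intro q hq
    rw [Finset.mem_product] at hq
    by_cases hzA : q.2 ∈ Ann
    · have hx : q.1 ∉ X := fun hx => hq ⟨hx, hzA⟩
      have := hFx q.1 q.2 hx
      simpa using this
    · have := hFz q.1 q.2 hzA
      simpa using this
  have hFsum : Summable F := summable_of_ne_finset_zero (s := X ×ˢ Ann) hFsupp
  have hFsum1 : ∀ z : Fin d → ℤ, Summable fun x => F (x, z) := fun z =>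
    summable_of_ne_finset_zero (s := X) fun x hx => hFx x z hx
  have hiter : ∑' q : (Fin d → ℤ) × (Fin d → ℤ), F q = ∑' z, ∑' x, F (x, z) := by
    rw [← (Equiv.prodComm (Fin d → ℤ) (Fin d → ℤ)).tsum_eq F]
    exact Summable.tsum_prod' (((Equiv.prodComm (Fin d → ℤ) (Fin d → ℤ)).summable_iff).2 hFsum)
      fun z => hFsum1 z
  have hzval : ∀ z ∈ S, ∑' x, F (x, z) = (‖pt d ε z‖ ^ (d + 2))⁻¹ * D z := by
    intro z hz
    have hc := hcond z hz
    have h1 : ∀ x, F (x, z) = (‖pt d ε z‖ ^ (d + 2))⁻¹ * (h (x + z) - h x) ^ 2 := by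
      intro x
      rw [hFdef]
      dsimp only
      rw [if_pos hc]
    rw [tsum_congr h1, tsum_mul_left]
  have hGsummable : Summable fun z : Fin d → ℤ => ∑' x, F (x, z) := by
    apply summable_of_ne_finset_zero (s := Ann)
    intro z hzA
    rw [tsum_congr fun x => hFz x z hzA, tsum_zero]
  have hlow : ∀ z ∈ S,
      ((Real.sqrt d * (ε * 3 ^ (k + 1))) ^ (d + 2))⁻¹ * (H / (M:ℝ) ^ 2) ≤ ∑' x, F (x, z) := by
    intro z hz
    rw [hzval z hz]
    have hp1 : 0 < ‖pt d ε z‖ := hptpos z hz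
    have hc1 : ((Real.sqrt d * (ε * 3 ^ (k + 1))) ^ (d + 2))⁻¹ ≤ (‖pt d ε z‖ ^ (d + 2))⁻¹ := by
      apply inv_anti₀ (by positivity)
      exact pow_le_pow_left₀ hp1.le (hptupper z hz) _
    have hc2 : H / (M:ℝ) ^ 2 ≤ D z := by
      rw [div_le_iff₀ (by positivity)]
      calc H ≤ (M:ℝ) ^ 2 * D z := hchain z hz
        _ = D z * (M:ℝ) ^ 2 := by ring
    exact mul_le_mul hc1 hc2 (div_nonneg hHnn (by positivity)) (by positivity)
  have hcardsum : ((3:ℝ) ^ k) ^ d *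
      (((Real.sqrt d * (ε * 3 ^ (k + 1))) ^ (d + 2))⁻¹ * (H / (M:ℝ) ^ 2)) ≤
      ∑ z ∈ S, ∑' x, F (x, z) := by
    have h1 := Finset.card_nsmul_le_sum S (fun z => ∑' x, F (x, z)) _ hlow
    rw [hScard, nsmul_eq_mul] at h1
    have h2 : (((3 ^ k) ^ d : ℕ) : ℝ) = ((3:ℝ) ^ k) ^ d := by push_cast; ring
    rw [h2] at h1
    exact h1
  have hsumtsum : ∑ z ∈ S, ∑' x, F (x, z) ≤ ∑' z, ∑' x, F (x, z) :=
    Summable.sum_le_tsum S (fun z _ => tsum_nonneg fun x => hFnn (x, z)) hGsummable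
  have hTge : ((3:ℝ) ^ k) ^ d *
      (((Real.sqrt d * (ε * 3 ^ (k + 1))) ^ (d + 2))⁻¹ * (H / (M:ℝ) ^ 2)) ≤
      ∑' q : (Fin d → ℤ) × (Fin d → ℤ), F q := by
    rw [hiter]
    exact hcardsum.trans hsumtsum
  -- final algebra
  have hQle : H * (ε * 3 ^ k) ^ 2 / (9 * R ^ 2) ≤ H / (M:ℝ) ^ 2 := by
    rw [div_le_div_iff₀ (by positivity) (by positivity)]
    calc H * (ε * 3 ^ k) ^ 2 * (M:ℝ) ^ 2 = H * ((M:ℝ) * (ε * 3 ^ k)) ^ 2 := by ring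
      _ ≤ H * (3 * R) ^ 2 := by
          apply mul_le_mul_of_nonneg_left _ hHnn
          exact pow_le_pow_left₀ (by positivity) hM2 2
      _ = H * (9 * R ^ 2) := by ring
  have hiden : ε ^ d * H = 9 * (3 * Real.sqrt d) ^ (d + 2) * R ^ 2 * ε ^ (2 * d) *
      (((3:ℝ) ^ k) ^ d * (((Real.sqrt d * (ε * 3 ^ (k + 1))) ^ (d + 2))⁻¹ *
        (H * (ε * 3 ^ k) ^ 2 / (9 * R ^ 2)))) := by
    rw [show (3:ℝ) ^ (k + 1) = 3 ^ k * 3 from pow_succ 3 k]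
    have hne : (Real.sqrt d * (ε * (3 ^ k * 3))) ^ (d + 2) ≠ 0 := by positivity
    field_simp
    ring
  calc ε ^ d * H = 9 * (3 * Real.sqrt d) ^ (d + 2) * R ^ 2 * ε ^ (2 * d) *
      (((3:ℝ) ^ k) ^ d * (((Real.sqrt d * (ε * 3 ^ (k + 1))) ^ (d + 2))⁻¹ *
        (H * (ε * 3 ^ k) ^ 2 / (9 * R ^ 2)))) := hiden
    _ ≤ 9 * (3 * Real.sqrt d) ^ (d + 2) * R ^ 2 * ε ^ (2 * d) *
      (((3:ℝ) ^ k) ^ d * (((Real.sqrt d * (ε * 3 ^ (k + 1))) ^ (d + 2))⁻¹ *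
        (H / (M:ℝ) ^ 2))) := by
      refine mul_le_mul_of_nonneg_left ?_ (by positivity)
      refine mul_le_mul_of_nonneg_left ?_ (by positivity)
      exact mul_le_mul_of_nonneg_left hQle (by positivity)
    _ ≤ 9 * (3 * Real.sqrt d) ^ (d + 2) * R ^ 2 * ε ^ (2 * d) *
        ∑' q : (Fin d → ℤ) × (Fin d → ℤ), F q := by
      exact mul_le_mul_of_nonneg_left hTge (by positivity)
end
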